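/- Let κ₁, κ₂, κ₃, C > 0 with κ₂ ≥ 1, let E₀ ≥ 0, and let E : [0,∞) → [0,∞) be continuous with E(0) ≤ κ₂E₀. Suppose that for every t ≥ 0, E(t) ≤ κ₂E₀ + C(κ₁ E(t)^{3/2} + κ₂κ₃ E(t)²). If Cκ₁(2κ₂E₀)^{1/2} + Cκ₂κ₃(2κ₂E₀) ≤ 1/4, then E(t) ≤ 2κ₂E₀ for every t ≥ 0. -/

import Mathlib

/-- a continuity (bootstrap) argument. -/
theorem stmt18 (κ₁ κ₂ κ₃ C E₀ : ℝ) (hκ₁ : 0 < κ₁) (hκ₂ : 0 < κ₂) (hκ₃ : 0 < κ₃)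
    (hC : 0 < C) (hκ₂1 : 1 ≤ κ₂) (hE₀ : 0 ≤ E₀) (E : ℝ → ℝ)
    (hEcont : ContinuousOn E (Set.Ici 0))
    (hEnonneg : ∀ t, 0 ≤ t → 0 ≤ E t)
    (hE0 : E 0 ≤ κ₂ * E₀)
    (hboot : ∀ t, 0 ≤ t → E t ≤ κ₂ * E₀ + C * (κ₁ * E t ^ ((3:ℝ)/2) + κ₂ * κ₃ * E t ^ 2))
    (hsmall : C * κ₁ * (2 * κ₂ * E₀) ^ ((1:ℝ)/2) + C * κ₂ * κ₃ * (2 * κ₂ * E₀) ≤ 1/4) :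
    ∀ t, 0 ≤ t → E t ≤ 2 * κ₂ * E₀ := by
  intro t ht
  by_contra h
  push_neg at h
  have hc : ContinuousOn E (Set.Icc 0 t) :=
    hEcont.mono (fun x hx => hx.1)
  rcases eq_or_lt_of_le hE₀ with h0 | h0
  · -- E₀ = 0
    set v : ℝ := min (E t) (min ((3*C*κ₁)⁻¹^2) ((3*C*κ₂*κ₃)⁻¹)) with hv
    have hvpos : 0 < v := by
      apply lt_min
      · nlinarith
      · apply lt_min <;> positivity
    have hvE : v ∈ Set.Icc (E 0) (E t) := by
      constructor
      · have : E 0 ≤ 0 := by nlinarith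
        linarith
      · exact min_le_left _ _
    obtain ⟨s, hs, hEs⟩ := intermediate_value_Icc ht hc hvE
    have hb := hboot s hs.1
    rw [hEs] at hb
    have h32 : v ^ ((3:ℝ)/2) = v * v ^ ((1:ℝ)/2) := by
      rw [← Real.rpow_one_add' (le_of_lt hvpos) (by norm_num)]
      norm_num
    have hsqrt : v ^ ((1:ℝ)/2) ≤ (3*C*κ₁)⁻¹ := by
      have h1 : v ≤ (3*C*κ₁)⁻¹^2 := le_trans (min_le_right _ _) (min_le_left _ _)
      have h2 : v ^ ((1:ℝ)/2) ≤ ((3*C*κ₁)⁻¹^2) ^ ((1:ℝ)/2) :=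
        Real.rpow_le_rpow (le_of_lt hvpos) h1 (by norm_num)
      calc v ^ ((1:ℝ)/2) ≤ ((3*C*κ₁)⁻¹^2) ^ ((1:ℝ)/2) := h2
        _ = (3*C*κ₁)⁻¹ := by
          rw [← Real.rpow_natCast ((3*C*κ₁)⁻¹) 2, ← Real.rpow_mul (by positivity)]
          norm_num
    have hv2 : v ≤ (3*C*κ₂*κ₃)⁻¹ := le_trans (min_le_right _ _) (min_le_right _ _)
    have hterm1 : C * κ₁ * v ^ ((1:ℝ)/2) ≤ 1/3 := by
      calc C * κ₁ * v ^ ((1:ℝ)/2) ≤ C * κ₁ * (3*C*κ₁)⁻¹ :=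
            mul_le_mul_of_nonneg_left hsqrt (by positivity)
        _ = 1/3 := by field_simp
    have hterm2 : C * κ₂ * κ₃ * v ≤ 1/3 := by
      have : C * κ₂ * κ₃ * v ≤ C * κ₂ * κ₃ * (3*C*κ₂*κ₃)⁻¹ := by
        apply mul_le_mul_of_nonneg_left hv2 (by positivity)
      calc C * κ₂ * κ₃ * v ≤ C * κ₂ * κ₃ * (3*C*κ₂*κ₃)⁻¹ := this
        _ = 1/3 := by field_simp
    have hsq : v ^ 2 = v * v := sq v
    rw [h32, hsq] at hb
    have step : C * (κ₁ * (v * v ^ ((1:ℝ)/2)) + κ₂ * κ₃ * (v * v))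
        = (C * κ₁ * v ^ ((1:ℝ)/2) + C * κ₂ * κ₃ * v) * v := by ring
    rw [step] at hb
    have h4 : (C * κ₁ * v ^ ((1:ℝ)/2) + C * κ₂ * κ₃ * v) * v ≤ (2/3) * v :=
      mul_le_mul_of_nonneg_right (by linarith) hvpos.le
    have hz : κ₂ * E₀ = 0 := by rw [← h0]; ring
    linarith
  · -- E₀ > 0
    set v : ℝ := 3/2 * (κ₂ * E₀) with hv
    have hvpos : 0 < v := by positivity
    have hvE : v ∈ Set.Icc (E 0) (E t) := by
      constructor
      · nlinarith
      · nlinarith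
    obtain ⟨s, hs, hEs⟩ := intermediate_value_Icc ht hc hvE
    have hb := hboot s hs.1
    rw [hEs] at hb
    have h32 : v ^ ((3:ℝ)/2) = v * v ^ ((1:ℝ)/2) := by
      rw [← Real.rpow_one_add' (le_of_lt hvpos) (by norm_num)]
      norm_num
    have hM : (0:ℝ) < 2 * κ₂ * E₀ := by positivity
    have hvM : v ≤ 2 * κ₂ * E₀ := by nlinarith
    have hsqrt : v ^ ((1:ℝ)/2) ≤ (2*κ₂*E₀) ^ ((1:ℝ)/2) :=
      Real.rpow_le_rpow hvpos.le hvM (by norm_num)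
    have hsqpos : 0 ≤ v ^ ((1:ℝ)/2) := Real.rpow_nonneg hvpos.le _
    have hsq : v ^ 2 = v * v := sq v
    rw [h32, hsq] at hb
    -- v ≤ κ₂E₀ + (Cκ₁·v^{1/2} + Cκ₂κ₃·v)·v ≤ κ₂E₀ + (Cκ₁√M + Cκ₂κ₃M)·v ≤ κ₂E₀ + v/4
    have key : C * κ₁ * v ^ ((1:ℝ)/2) + C * κ₂ * κ₃ * v ≤ 1/4 := by
      have h1 : C * κ₁ * v ^ ((1:ℝ)/2) ≤ C * κ₁ * (2*κ₂*E₀)^((1:ℝ)/2) :=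
        mul_le_mul_of_nonneg_left hsqrt (by positivity)
      have h2 : C * κ₂ * κ₃ * v ≤ C * κ₂ * κ₃ * (2*κ₂*E₀) :=
        mul_le_mul_of_nonneg_left hvM (by positivity)
      linarith
    have step : C * (κ₁ * (v * v ^ ((1:ℝ)/2)) + κ₂ * κ₃ * (v * v))
        = (C * κ₁ * v ^ ((1:ℝ)/2) + C * κ₂ * κ₃ * v) * v := by ring
    rw [step] at hb
    have h4 : (C * κ₁ * v ^ ((1:ℝ)/2) + C * κ₂ * κ₃ * v) * v ≤ (1/4) * v :=
      mul_le_mul_of_nonneg_right key hvpos.le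
    have hp : 0 < κ₂ * E₀ := mul_pos hκ₂ h0
    linarith
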